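/- Let C ∈ ℝ^{n×n} be symmetric with zero diagonal, β ∈ [0,1), and δ > 0. Let V* ∈ ℝ^{k×n} be feasible with Σ_{j≠i} c_{ij} v*_j = −y*_i v*_i and y*_i = ‖Σ_{j≠i} c_{ij} v*_j‖₂ > 0 for all i, such that C + diag(y*) is positive semidefinite; set f* = f(V*). Then there exists a constant τ > 0, depending only on C, β, and δ, such that for every feasible V whose pass of Mixing Method++ is well-defined and satisfies y_i ≥ δ for all i (with associated y, w), one has Σ_{i=1}^n ((w_i + β) y_i − (1+β) y*_i)² ≤ τ · (f(V) − f*). -/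

import Mathlib

open Matrix Finset
open scoped BigOperators RealInnerProductSpace

/-- The SDP objective `f(W) = trace(C Wᵀ W) = ∑ i j, C i j ⟨w_i, w_j⟩`, expressed
in terms of the columns `w_1, …, w_n` of `W`. -/
noncomputable def obj {n k : ℕ} (C : Matrix (Fin n) (Fin n) ℝ)
    (V : Fin n → EuclideanSpace ℝ (Fin k)) : ℝ :=
  ∑ i, ∑ j, C i j * ⟪V i, V j⟫

lemma gron_aux (a R : ℝ) (ha : 0 ≤ a) (D : ℕ → ℝ)
    (hD : ∀ m, D m ≤ R + a * ∑ j ∈ Finset.range m, D j) :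
    ∀ m, R + a * ∑ j ∈ Finset.range m, D j ≤ (1 + a) ^ m * R := by
  intro m
  induction m with
  | zero => simp
  | succ m ih =>
    rw [Finset.sum_range_succ, mul_add, pow_succ]
    have h1 : D m ≤ (1 + a) ^ m * R := le_trans (hD m) ih
    nlinarith [ih, mul_le_mul_of_nonneg_left h1 ha]

lemma psd_cs {n : ℕ} (A : Matrix (Fin n) (Fin n) ℝ) (hA : A.PosSemidef)
    (x : Fin n → ℝ) :
    (A.mulVec x) ⬝ᵥ (A.mulVec x) ≤ (∑ i, ∑ j, |A i j|) * (x ⬝ᵥ A.mulVec x) := by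
  set F := ∑ i, ∑ j, |A i j| with hF
  have hFnn : 0 ≤ F := Finset.sum_nonneg fun i _ => Finset.sum_nonneg fun j _ => abs_nonneg _
  have hsymm : Aᵀ = A := hA.1
  set z := A.mulVec x with hz
  have hb : 0 ≤ z ⬝ᵥ z := Finset.sum_nonneg fun i _ => mul_self_nonneg _
  have hQ : ∀ v : Fin n → ℝ, 0 ≤ v ⬝ᵥ A.mulVec v := by
    intro v; simpa using hA.dotProduct_mulVec_nonneg v
  have hcross : x ⬝ᵥ A.mulVec z = z ⬝ᵥ z := by
    rw [Matrix.dotProduct_mulVec, ← hsymm]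
    simp [Matrix.vecMul_transpose, hz]
  have hcross2 : z ⬝ᵥ A.mulVec x = z ⬝ᵥ z := rfl
  have hQz : z ⬝ᵥ A.mulVec z ≤ F * (z ⬝ᵥ z) := by
    have hexp : z ⬝ᵥ A.mulVec z = ∑ i, ∑ j, A i j * z i * z j := by
      simp [dotProduct, Matrix.mulVec, Finset.mul_sum, mul_comm, mul_assoc, mul_left_comm]
    rw [hexp, hF, Finset.sum_mul]
    apply Finset.sum_le_sum
    intro i _
    rw [Finset.sum_mul]
    apply Finset.sum_le_sum
    intro j _
    have h1 : z i ^ 2 ≤ z ⬝ᵥ z := by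
      have := Finset.single_le_sum (f := fun l => z l * z l)
        (fun l _ => mul_self_nonneg _) (Finset.mem_univ i)
      simpa [dotProduct, sq] using this
    have h2 : z j ^ 2 ≤ z ⬝ᵥ z := by
      have := Finset.single_le_sum (f := fun l => z l * z l)
        (fun l _ => mul_self_nonneg _) (Finset.mem_univ j)
      simpa [dotProduct, sq] using this
    have habs : |A i j * z i * z j| ≤ |A i j| * (z ⬝ᵥ z) := by
      rw [abs_mul, abs_mul]
      have h3 : |z i| * |z j| ≤ z ⬝ᵥ z := by
        nlinarith [sq_abs (z i), sq_abs (z j), abs_nonneg (z i), abs_nonneg (z j)]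
      calc |A i j| * |z i| * |z j| = |A i j| * (|z i| * |z j|) := by ring
        _ ≤ |A i j| * (z ⬝ᵥ z) := mul_le_mul_of_nonneg_left h3 (abs_nonneg _)
    calc A i j * z i * z j ≤ |A i j * z i * z j| := le_abs_self _
      _ ≤ |A i j| * (z ⬝ᵥ z) := habs
  by_cases hzero : z ⬝ᵥ z = 0
  · rw [hcross2, hzero]
    exact mul_nonneg hFnn (hQ x)
  · have hbpos : 0 < z ⬝ᵥ z := lt_of_le_of_ne hb (Ne.symm hzero)
    have hQAz := hQ z
    by_cases hQz0 : z ⬝ᵥ A.mulVec z = 0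
    · exfalso
      set t := (x ⬝ᵥ A.mulVec x + 1) / (2 * (z ⬝ᵥ z)) with ht
      have hexp : (x - t • z) ⬝ᵥ A.mulVec (x - t • z)
          = x ⬝ᵥ A.mulVec x - 2 * t * (z ⬝ᵥ z) + t^2 * (z ⬝ᵥ A.mulVec z) := by
        simp only [Matrix.mulVec_sub, Matrix.mulVec_smul, sub_dotProduct,
          dotProduct_sub, smul_dotProduct, dotProduct_smul,
          smul_eq_mul, hcross, hcross2]
        ring
      have h0 := hQ (x - t • z)
      rw [hexp, hQz0] at h0
      have h4 : 2 * t * (z ⬝ᵥ z) = x ⬝ᵥ A.mulVec x + 1 := by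
        rw [ht]; field_simp
      nlinarith
    · have hQzpos : 0 < z ⬝ᵥ A.mulVec z := lt_of_le_of_ne hQAz (Ne.symm hQz0)
      set t := (z ⬝ᵥ z) / (z ⬝ᵥ A.mulVec z) with ht
      have hexp : (x - t • z) ⬝ᵥ A.mulVec (x - t • z)
          = x ⬝ᵥ A.mulVec x - 2 * t * (z ⬝ᵥ z) + t^2 * (z ⬝ᵥ A.mulVec z) := by
        simp only [Matrix.mulVec_sub, Matrix.mulVec_smul, sub_dotProduct,
          dotProduct_sub, smul_dotProduct, dotProduct_smul,
          smul_eq_mul, hcross, hcross2]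
        ring
      have h0 := hQ (x - t • z)
      rw [hexp] at h0
      have hkey : (z ⬝ᵥ z)^2 ≤ (x ⬝ᵥ A.mulVec x) * (z ⬝ᵥ A.mulVec z) := by
        have ht2 : t * (z ⬝ᵥ A.mulVec z) = z ⬝ᵥ z := by rw [ht]; field_simp
        nlinarith
      rw [hcross2]
      have h3 : (z ⬝ᵥ z)^2 ≤ (x ⬝ᵥ A.mulVec x) * (F * (z ⬝ᵥ z)) :=
        le_trans hkey (mul_le_mul_of_nonneg_left hQz (hQ x))
      nlinarith [hQ x]

lemma euc_sum_apply {ι : Type*} [DecidableEq ι] {k : ℕ} (s : Finset ι) (f : ι → EuclideanSpace ℝ (Fin k)) (l : Fin k) :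
    (∑ j ∈ s, f j) l = ∑ j ∈ s, f j l := by
  induction s using Finset.induction with
  | empty => rfl
  | insert _ _ h ih => rw [Finset.sum_insert h, Finset.sum_insert h, ← ih]; rfl


set_option maxHeartbeats 4000000 in
/-- Lemma 4 of the paper: there is a constant `τ > 0` such that for every feasible `V`
whose pass of Mixing Method++ is well-defined with `y_i ≥ δ`,
`∑ i, ((w_i + β) y_i - (1+β) y*_i)² ≤ τ (f(V) - f*)`. -/
theorem mixing_pp_delta_bound {n k : ℕ}
    (C : Matrix (Fin n) (Fin n) ℝ) (hC : C.IsSymm) (hCdiag : ∀ i, C i i = 0)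
    (β : ℝ) (hβ0 : 0 ≤ β) (hβ1 : β < 1) (δ : ℝ) (hδ : 0 < δ)
    -- the optimum `V*` with its dual-feasible vector `y*`
    (Vstar : Fin n → EuclideanSpace ℝ (Fin k)) (ystar : Fin n → ℝ)
    (hVstar : ∀ i, ‖Vstar i‖ = 1) (hystarpos : ∀ i, 0 < ystar i)
    (hystar : ∀ i, ystar i = ‖∑ j ∈ Finset.univ.filter (fun j => j ≠ i), C i j • Vstar j‖)
    (hfixstar : ∀ i, (∑ j ∈ Finset.univ.filter (fun j => j ≠ i), C i j • Vstar j) =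
        -(ystar i • Vstar i))
    (hdualpsd : (C + Matrix.diagonal ystar).PosSemidef) :
    ∃ τ : ℝ, 0 < τ ∧
      ∀ (V Vh g u : Fin n → EuclideanSpace ℝ (Fin k)) (y w : Fin n → ℝ),
        (∀ i, ‖V i‖ = 1) →
        (∀ i, g i = (∑ j ∈ Finset.univ.filter (fun j => j < i), C i j • Vh j) +
                    ∑ j ∈ Finset.univ.filter (fun j => i < j), C i j • V j) →
        (∀ i, y i = ‖g i‖) → (∀ i, 0 < y i) → (∀ i, δ ≤ y i) →
        (∀ i, u i = -((y i)⁻¹ • g i)) →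
        (∀ i, w i = ‖(1 + β) • u i - β • V i‖) →
        (∀ i, Vh i = (w i)⁻¹ • ((1 + β) • u i - β • V i)) →
        ∑ i, ((w i + β) * y i - (1 + β) * ystar i) ^ 2 ≤
          τ * (obj C V - obj C Vstar) := by
  classical
  set A : Matrix (Fin n) (Fin n) ℝ := C + Matrix.diagonal ystar with hA
  set F : ℝ := ∑ i, ∑ j, |A i j| with hFdef
  have hFnn : 0 ≤ F := Finset.sum_nonneg fun i _ => Finset.sum_nonneg fun j _ => abs_nonneg _
  set Cmax : ℝ := ∑ i, ∑ j, |C i j| with hCmaxdef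
  have hCmaxnn : 0 ≤ Cmax := Finset.sum_nonneg fun i _ => Finset.sum_nonneg fun j _ => abs_nonneg _
  have hCmax : ∀ i j, |C i j| ≤ Cmax := by
    intro i j
    calc |C i j| ≤ ∑ j', |C i j'| :=
          Finset.single_le_sum (f := fun j' => |C i j'|) (fun l _ => abs_nonneg _) (Finset.mem_univ j)
      _ ≤ Cmax := Finset.single_le_sum (f := fun i' => ∑ j', |C i' j'|)
          (fun l _ => Finset.sum_nonneg fun j' _ => abs_nonneg _) (Finset.mem_univ i)
  set K : ℝ := 2 * (1 + 2 * β) / δ with hKdef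
  have hKnn : 0 ≤ K := by positivity
  set a : ℝ := K * Cmax with hadef
  have hann : 0 ≤ a := mul_nonneg hKnn hCmaxnn
  set G : ℝ := (1 + a) ^ n with hGdef
  have hGnn : (1:ℝ) ≤ G := one_le_pow₀ (by linarith)
  set c₁ : ℝ := 1 + 3 * β with hc₁def
  have hc₁pos : 0 < c₁ := by linarith
  refine ⟨(n:ℝ)^2 * c₁^2 * G^2 * F + 1, by positivity, ?_⟩
  intro V Vh g u y w hV hg hy hypos hyδ hu hw hVh
  -- inner product facts
  have hinner_one : ∀ v : EuclideanSpace ℝ (Fin k), ‖v‖ = 1 → ⟪v, v⟫ = (1:ℝ) := by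
    intro v hv; rw [real_inner_self_eq_norm_sq, hv]; norm_num
  set q : ℝ := ∑ i, ∑ j, A i j * ⟪V i, V j⟫ with hqdef
  have hqW : ∀ (W : Fin n → EuclideanSpace ℝ (Fin k)), (∀ i, ‖W i‖ = 1) →
      (∑ i, ∑ j, A i j * ⟪W i, W j⟫) = obj C W + ∑ i, ystar i := by
    intro W hW
    rw [obj, ← Finset.sum_add_distrib]
    apply Finset.sum_congr rfl
    intro i _
    have h1 : ∑ j, A i j * ⟪W i, W j⟫
        = ∑ j, (C i j * ⟪W i, W j⟫ + (if i = j then ystar i * ⟪W i, W j⟫ else 0)) := by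
      apply Finset.sum_congr rfl; intro j _
      rw [hA]
      by_cases hij : i = j <;>
        simp [Matrix.add_apply, Matrix.diagonal_apply, hij, add_mul]
    rw [h1, Finset.sum_add_distrib, Finset.sum_ite_eq]
    simp [hinner_one (W i) (hW i), hW i]
  have hfix0 : ∀ i, (∑ j, A i j • Vstar j) = 0 := by
    intro i
    have hsum : ∑ j ∈ Finset.univ.filter (fun j => j ≠ i), C i j • Vstar j
        = ∑ j, C i j • Vstar j := by
      apply Finset.sum_filter_of_ne
      intro x _ hx
      intro hxi; apply hx; rw [hxi, hCdiag]; simp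
    have h2 : ∑ j, A i j • Vstar j
        = ∑ j, (C i j • Vstar j + (if i = j then ystar i • Vstar j else 0)) := by
      apply Finset.sum_congr rfl; intro j _
      rw [hA]
      by_cases hij : i = j <;>
        simp [Matrix.add_apply, Matrix.diagonal_apply, hij, add_smul]
    rw [h2, Finset.sum_add_distrib, Finset.sum_ite_eq, ← hsum, hfixstar]
    simp
  have hqstar : obj C Vstar + ∑ i, ystar i = 0 := by
    rw [← hqW Vstar hVstar]
    apply Finset.sum_eq_zero; intro i _
    have h3 : ∑ j, A i j * ⟪Vstar i, Vstar j⟫ = ⟪Vstar i, ∑ j, A i j • Vstar j⟫ := by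
      rw [inner_sum]; apply Finset.sum_congr rfl; intro j _; rw [real_inner_smul_right]
    rw [h3, hfix0, inner_zero_right]
  have hdiff : obj C V - obj C Vstar = q := by
    have h1 := hqW V hV
    rw [hqdef]; linarith
  -- coordinate form of q
  have hinner_coord : ∀ x z : EuclideanSpace ℝ (Fin k), ⟪x, z⟫ = ∑ l, x l * z l := by
    intro x z
    simp [PiLp.inner_apply, RCLike.inner_apply, starRingEnd_apply, mul_comm]
  have hnormsq : ∀ x : EuclideanSpace ℝ (Fin k), ‖x‖^2 = ∑ l, (x l)^2 := by
    intro x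
    rw [← real_inner_self_eq_norm_sq, hinner_coord]
    apply Finset.sum_congr rfl; intro l _; rw [pow_two]
  have hq_coord : q = ∑ l, (fun i' => V i' l) ⬝ᵥ A.mulVec (fun i' => V i' l) := by
    calc q = ∑ i, ∑ j, ∑ l, A i j * (V i l * V j l) := by
          rw [hqdef]
          exact Finset.sum_congr rfl fun i _ => Finset.sum_congr rfl fun j _ => by
            rw [hinner_coord, Finset.mul_sum]
      _ = ∑ i, ∑ l, ∑ j, A i j * (V i l * V j l) :=
          Finset.sum_congr rfl fun i _ => Finset.sum_comm
      _ = ∑ l, ∑ i, ∑ j, A i j * (V i l * V j l) := Finset.sum_comm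
      _ = ∑ l, (fun i' => V i' l) ⬝ᵥ A.mulVec (fun i' => V i' l) := by
          apply Finset.sum_congr rfl; intro l _
          simp only [dotProduct, Matrix.mulVec, Finset.mul_sum]
          exact Finset.sum_congr rfl fun i _ => Finset.sum_congr rfl fun j _ => by ring
  have hqnn : 0 ≤ q := by
    rw [hq_coord]
    exact Finset.sum_nonneg fun l _ => by simpa using hdualpsd.dotProduct_mulVec_nonneg (fun i' => V i' l)
  set r : Fin n → EuclideanSpace ℝ (Fin k) := fun i => ∑ j, A i j • V j with hrdef
  have hr_coord : ∀ (i : Fin n) (l : Fin k), r i l = A.mulVec (fun i' => V i' l) i := by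
    intro i l
    show (∑ j, A i j • V j) l = _
    rw [euc_sum_apply]
    simp [Matrix.mulVec, dotProduct]
  have hrsum : ∑ i, ‖r i‖^2 ≤ F * q := by
    calc ∑ i, ‖r i‖^2 = ∑ i, ∑ l, (r i l)^2 :=
          Finset.sum_congr rfl fun i _ => hnormsq _
      _ = ∑ l, ∑ i, (r i l)^2 := Finset.sum_comm
      _ = ∑ l, (A.mulVec (fun i' => V i' l)) ⬝ᵥ (A.mulVec (fun i' => V i' l)) := by
          apply Finset.sum_congr rfl; intro l _
          simp only [dotProduct]
          exact Finset.sum_congr rfl fun i _ => by rw [hr_coord i l]; ring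
      _ ≤ ∑ l, F * ((fun i' => V i' l) ⬝ᵥ A.mulVec (fun i' => V i' l)) := by
          apply Finset.sum_le_sum; intro l _
          rw [hFdef]; exact psd_cs A hdualpsd _
      _ = F * q := by rw [hq_coord, Finset.mul_sum]
  -- deviation vectors
  set d : Fin n → EuclideanSpace ℝ (Fin k) := fun i => g i + ystar i • V i with hddef
  have hdy : ∀ i, |y i - ystar i| ≤ ‖d i‖ := by
    intro i
    have h1 : ‖(-(ystar i • V i) : EuclideanSpace ℝ (Fin k))‖ = ystar i := by
      rw [norm_neg, norm_smul, hV i, Real.norm_eq_abs, abs_of_pos (hystarpos i), mul_one]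
    have h2 := abs_norm_sub_norm_le (g i) (-(ystar i • V i))
    rw [h1, sub_neg_eq_add] at h2
    rw [hy i]
    exact h2
  have hu_norm : ∀ i, ‖u i‖ = 1 := by
    intro i
    rw [hu i, norm_neg, norm_smul, Real.norm_eq_abs,
      abs_of_pos (inv_pos.mpr (hypos i)), ← hy i]
    field_simp [ne_of_gt (hypos i)]
  have huv : ∀ i, ‖u i - V i‖ ≤ 2 * ‖d i‖ / δ := by
    intro i
    have hinv : (y i)⁻¹ • (y i • V i) = V i := by
      rw [smul_smul, inv_mul_cancel₀ (ne_of_gt (hypos i)), one_smul]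
    have h1 : u i - V i = -((y i)⁻¹ • (g i + y i • V i)) := by
      rw [hu i, smul_add, hinv, neg_add, sub_eq_add_neg]
    have h3 : g i + y i • V i = d i + (y i - ystar i) • V i := by
      show g i + y i • V i = (g i + ystar i • V i) + (y i - ystar i) • V i
      rw [sub_smul]; abel
    have h2 : ‖g i + y i • V i‖ ≤ 2 * ‖d i‖ := by
      rw [h3]
      calc ‖d i + (y i - ystar i) • V i‖ ≤ ‖d i‖ + ‖(y i - ystar i) • V i‖ := norm_add_le _ _
        _ = ‖d i‖ + |y i - ystar i| := by rw [norm_smul, hV i, Real.norm_eq_abs, mul_one]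
        _ ≤ 2 * ‖d i‖ := by linarith [hdy i]
    rw [h1, norm_neg, norm_smul, Real.norm_eq_abs, abs_of_pos (inv_pos.mpr (hypos i))]
    have hinvle : (y i)⁻¹ ≤ δ⁻¹ := by
      apply inv_anti₀ hδ (hyδ i)
    calc (y i)⁻¹ * ‖g i + y i • V i‖ ≤ δ⁻¹ * (2 * ‖d i‖) :=
          mul_le_mul hinvle h2 (norm_nonneg _) (le_of_lt (inv_pos.mpr hδ))
      _ = 2 * ‖d i‖ / δ := by rw [div_eq_inv_mul]
  have hw1 : ∀ i, 1 ≤ w i := by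
    intro i
    have h := norm_sub_norm_le ((1+β) • u i) (β • V i)
    rw [norm_smul, norm_smul, hu_norm i, hV i, Real.norm_eq_abs, Real.norm_eq_abs,
      abs_of_pos (by linarith : (0:ℝ) < 1 + β), abs_of_nonneg hβ0, mul_one, mul_one] at h
    rw [hw i]; linarith
  have hvh : ∀ i, ‖Vh i - V i‖ ≤ K * ‖d i‖ := by
    intro i
    set z := (1 + β) • u i - β • V i with hzdef
    have hwz : w i = ‖z‖ := hw i
    have hwpos : 0 < w i := lt_of_lt_of_le one_pos (hw1 i)
    have hzu : z - u i = β • (u i - V i) := by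
      rw [hzdef, smul_sub]
      have : (1 + β) • u i = u i + β • u i := by rw [add_smul, one_smul]
      rw [this]; abel
    have h1 : ‖z - u i‖ = β * ‖u i - V i‖ := by
      rw [hzu, norm_smul, Real.norm_eq_abs, abs_of_nonneg hβ0]
    have h3 : ‖Vh i - z‖ = |(w i)⁻¹ - 1| * ‖z‖ := by
      rw [hVh i, ← hzdef]
      rw [show (w i)⁻¹ • z - z = ((w i)⁻¹ - 1) • z by rw [sub_smul, one_smul]]
      rw [norm_smul, Real.norm_eq_abs]
    have h4 : |(w i)⁻¹ - 1| * ‖z‖ = |1 - w i| := by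
      rw [← hwz]
      rw [show (w i)⁻¹ - 1 = (1 - w i) / w i by field_simp]
      rw [abs_div, abs_of_pos hwpos, div_mul_cancel₀ _ (ne_of_gt hwpos)]
    have h5 : |1 - w i| ≤ ‖z - u i‖ := by
      have h6 := abs_norm_sub_norm_le (u i) z
      rw [hu_norm i, ← hwz] at h6
      calc |1 - w i| ≤ ‖u i - z‖ := h6
        _ = ‖z - u i‖ := norm_sub_rev _ _
    have h2 : ‖Vh i - u i‖ ≤ 2 * (β * ‖u i - V i‖) := by
      have h7 : ‖Vh i - u i‖ ≤ ‖Vh i - z‖ + ‖z - u i‖ := by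
        have := dist_triangle (Vh i) z (u i)
        simpa [dist_eq_norm] using this
      rw [h3, h4] at h7
      rw [h1] at h5 h7
      linarith
    have h8 : ‖Vh i - V i‖ ≤ ‖Vh i - u i‖ + ‖u i - V i‖ := by
      have := dist_triangle (Vh i) (u i) (V i)
      simpa [dist_eq_norm] using this
    have h9 : ‖Vh i - V i‖ ≤ (1 + 2*β) * ‖u i - V i‖ := by linarith
    have h10 := huv i
    calc ‖Vh i - V i‖ ≤ (1 + 2*β) * ‖u i - V i‖ := h9
      _ ≤ (1 + 2*β) * (2 * ‖d i‖ / δ) :=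
          mul_le_mul_of_nonneg_left h10 (by linarith)
      _ = K * ‖d i‖ := by rw [hKdef]; ring
  -- split of the full sum
  have hsplit : ∀ (f : Fin n → EuclideanSpace ℝ (Fin k)) (i : Fin n), f i = 0 →
      ∑ j ∈ Finset.univ.filter (fun j => j < i), f j
        + ∑ j ∈ Finset.univ.filter (fun j => i < j), f j = ∑ j, f j := by
    intro f i hfi
    rw [← Finset.sum_filter_add_sum_filter_not Finset.univ (fun j => j < i) f]
    congr 1
    apply Finset.sum_subset
    · intro x hx
      simp only [Finset.mem_filter, Finset.mem_univ, true_and] at *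
      exact lt_asymm hx
    · intro x hx hnx
      simp only [Finset.mem_filter, Finset.mem_univ, true_and] at hx hnx
      have : x = i := le_antisymm (le_of_not_gt hnx) (le_of_not_gt hx)
      rw [this, hfi]
  have hdr : ∀ i, d i = r i + ∑ j ∈ Finset.univ.filter (fun j => j < i), C i j • (Vh j - V j) := by
    intro i
    have hri : r i = (∑ j, C i j • V j) + ystar i • V i := by
      show (∑ j, A i j • V j) = _
      have h2 : ∑ j, A i j • V j
          = ∑ j, (C i j • V j + (if i = j then ystar i • V j else 0)) := by
        apply Finset.sum_congr rfl; intro j _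
        rw [hA]
        by_cases hij : i = j <;>
          simp [Matrix.add_apply, Matrix.diagonal_apply, hij, add_smul]
      rw [h2, Finset.sum_add_distrib, Finset.sum_ite_eq]
      simp
    have hsum := hsplit (fun j => C i j • V j) i (by simp [hCdiag i])
    show g i + ystar i • V i = _
    rw [hri, hg i]
    have hsub : ∑ j ∈ Finset.univ.filter (fun j => j < i), C i j • (Vh j - V j)
        = ∑ j ∈ Finset.univ.filter (fun j => j < i), C i j • Vh j
          - ∑ j ∈ Finset.univ.filter (fun j => j < i), C i j • V j := by
      rw [← Finset.sum_sub_distrib]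
      exact Finset.sum_congr rfl fun j _ => smul_sub _ _ _
    rw [hsub, ← hsum]
    abel
  have hdrec : ∀ i, ‖d i‖ ≤ ‖r i‖ + a * ∑ j ∈ Finset.univ.filter (fun j => j < i), ‖d j‖ := by
    intro i
    calc ‖d i‖ ≤ ‖r i‖ + ‖∑ j ∈ Finset.univ.filter (fun j => j < i), C i j • (Vh j - V j)‖ := by
          rw [hdr i]; exact norm_add_le _ _
      _ ≤ ‖r i‖ + ∑ j ∈ Finset.univ.filter (fun j => j < i), ‖C i j • (Vh j - V j)‖ :=
          add_le_add le_rfl (norm_sum_le _ _)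
      _ ≤ ‖r i‖ + ∑ j ∈ Finset.univ.filter (fun j => j < i), a * ‖d j‖ := by
          apply add_le_add le_rfl
          apply Finset.sum_le_sum
          intro j _
          rw [norm_smul, Real.norm_eq_abs]
          calc |C i j| * ‖Vh j - V j‖ ≤ Cmax * (K * ‖d j‖) :=
                mul_le_mul (hCmax i j) (hvh j) (norm_nonneg _) hCmaxnn
            _ = a * ‖d j‖ := by rw [hadef]; ring
      _ = ‖r i‖ + a * ∑ j ∈ Finset.univ.filter (fun j => j < i), ‖d j‖ := by
          rw [Finset.mul_sum]
  set R : ℝ := ∑ j, ‖r j‖ with hRdef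
  have hRnn : 0 ≤ R := Finset.sum_nonneg fun j _ => norm_nonneg _
  have hrR : ∀ i, ‖r i‖ ≤ R :=
    fun i => Finset.single_le_sum (f := fun j => ‖r j‖) (fun j _ => norm_nonneg _)
      (Finset.mem_univ i)
  set D : ℕ → ℝ := fun m => ∑ j ∈ Finset.univ.filter (fun j : Fin n => (j : ℕ) = m), ‖d j‖
    with hDdef
  have hDfin : ∀ i : Fin n, D (i : ℕ) = ‖d i‖ := by
    intro i
    have hfs : Finset.univ.filter (fun j : Fin n => (j : ℕ) = (i : ℕ)) = {i} := by
      ext j; simp [Fin.ext_iff]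
    show (∑ j ∈ Finset.univ.filter (fun j : Fin n => (j : ℕ) = (i : ℕ)), ‖d j‖) = ‖d i‖
    rw [hfs, Finset.sum_singleton]
  have hDsum : ∀ i : Fin n, ∑ m ∈ Finset.range (i : ℕ), D m
      = ∑ j ∈ Finset.univ.filter (fun j => j < i), ‖d j‖ := by
    intro i
    show (∑ m ∈ Finset.range (i : ℕ),
        ∑ j ∈ Finset.univ.filter (fun j : Fin n => (j : ℕ) = m), ‖d j‖) = _
    rw [Finset.sum_fiberwise_eq_sum_filter]
    congr 1
    ext j
    simp only [Finset.mem_filter, Finset.mem_univ, true_and, Finset.mem_range, Fin.lt_def]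
  have hDrec : ∀ m, D m ≤ R + a * ∑ j ∈ Finset.range m, D j := by
    intro m
    by_cases hm : m < n
    · have h1 : D m = ‖d (⟨m, hm⟩ : Fin n)‖ := hDfin ⟨m, hm⟩
      have h2 : ∑ j ∈ Finset.range m, D j
          = ∑ j ∈ Finset.univ.filter (fun j => j < (⟨m, hm⟩ : Fin n)), ‖d j‖ :=
        hDsum ⟨m, hm⟩
      rw [h1, h2]
      calc ‖d (⟨m, hm⟩ : Fin n)‖
          ≤ ‖r (⟨m, hm⟩ : Fin n)‖
            + a * ∑ j ∈ Finset.univ.filter (fun j => j < (⟨m, hm⟩ : Fin n)), ‖d j‖ :=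
            hdrec _
        _ ≤ R + a * ∑ j ∈ Finset.univ.filter (fun j => j < (⟨m, hm⟩ : Fin n)), ‖d j‖ :=
            add_le_add (hrR _) le_rfl
    · have h0 : D m = 0 := by
        show (∑ j ∈ Finset.univ.filter (fun j : Fin n => (j : ℕ) = m), ‖d j‖) = 0
        have hfs : Finset.univ.filter (fun j : Fin n => (j : ℕ) = m) = ∅ := by
          ext j; simp only [Finset.mem_filter, Finset.mem_univ, true_and,
            Finset.notMem_empty, iff_false]
          have := j.isLt; omega
        rw [hfs, Finset.sum_empty]
      rw [h0]
      have hsnn : 0 ≤ ∑ j ∈ Finset.range m, D j :=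
        Finset.sum_nonneg fun j _ => Finset.sum_nonneg fun _ _ => norm_nonneg _
      exact add_nonneg hRnn (mul_nonneg hann hsnn)
  have hdG : ∀ i : Fin n, ‖d i‖ ≤ G * R := by
    intro i
    have h1 := le_trans (hDrec (i : ℕ)) (gron_aux a R hann D hDrec (i : ℕ))
    rw [hDfin i] at h1
    have h2 : (1 + a) ^ (i : ℕ) ≤ G := by
      rw [hGdef]
      exact pow_le_pow_right₀ (by linarith) (Nat.le_of_lt i.isLt)
    calc ‖d i‖ ≤ (1 + a) ^ (i : ℕ) * R := h1
      _ ≤ G * R := mul_le_mul_of_nonneg_right h2 hRnn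
  -- the key per-coordinate bound
  have htb : ∀ i, |(w i + β) * y i - (1 + β) * ystar i| ≤ c₁ * ‖d i‖ := by
    intro i
    set s := β * y i - (1 + β) * ystar i with hsdef
    have hyu : y i • u i = -(g i) := by
      rw [hu i, smul_neg, smul_smul, mul_inv_cancel₀ (ne_of_gt (hypos i)), one_smul]
    have hX : w i * y i = ‖(1+β) • d i + s • V i‖ := by
      have h1 : y i • ((1 + β) • u i - β • V i) = -((1+β) • g i + (β * y i) • V i) := by
        rw [smul_sub, smul_comm (y i) (1+β) (u i), hyu, smul_smul, smul_neg]
        rw [show y i * β = β * y i by ring]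
        abel
      have h2 : (1+β) • g i + (β * y i) • V i = (1+β) • d i + s • V i := by
        show (1+β) • g i + (β * y i) • V i
            = (1+β) • (g i + ystar i • V i) + s • V i
        rw [smul_add, smul_smul, add_assoc, ← add_smul, hsdef]
        rw [show (1+β) * ystar i + (β * y i - (1+β) * ystar i) = β * y i by ring]
      calc w i * y i = y i * ‖(1+β) • u i - β • V i‖ := by rw [hw i]; ring
        _ = ‖y i • ((1+β) • u i - β • V i)‖ := by
            rw [norm_smul, Real.norm_eq_abs, abs_of_pos (hypos i)]
        _ = ‖(1+β) • g i + (β * y i) • V i‖ := by rw [h1, norm_neg]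
        _ = ‖(1+β) • d i + s • V i‖ := by rw [h2]
    have hY : ‖s • V i‖ = |s| := by
      rw [norm_smul, hV i, Real.norm_eq_abs, mul_one]
    have hwy : abs (w i * y i - |s|) ≤ (1 + β) * ‖d i‖ := by
      have h3 := abs_norm_sub_norm_le ((1+β) • d i + s • V i) (s • V i)
      rw [hY, add_sub_cancel_right, norm_smul, Real.norm_eq_abs,
        abs_of_pos (by linarith : (0:ℝ) < 1 + β)] at h3
      rw [hX]
      exact h3
    have hys := hdy i
    have hdnn : (0:ℝ) ≤ ‖d i‖ := norm_nonneg _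
    have ht_eq : (w i + β) * y i - (1+β) * ystar i = w i * y i + s := by
      rw [hsdef]; ring
    rw [ht_eq, hc₁def]
    rw [abs_le] at hys
    rcases le_or_gt s 0 with hs | hs
    · have habs : |s| = -s := abs_of_nonpos hs
      rw [habs, abs_le] at hwy
      rw [abs_le]
      constructor <;> nlinarith
    · have hsle : s ≤ β * ‖d i‖ := by
        rw [hsdef]; nlinarith [hystarpos i]
      have hwynn : 0 ≤ w i * y i :=
        mul_nonneg (le_trans zero_le_one (hw1 i)) (le_of_lt (hypos i))
      have habs : |s| = s := abs_of_pos hs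
      rw [habs, abs_le] at hwy
      rw [abs_le]
      constructor
      · nlinarith
      · nlinarith
  -- assembly
  rw [hdiff]
  have hterm : ∀ i, ((w i + β) * y i - (1+β) * ystar i)^2 ≤ c₁^2 * G^2 * R^2 := by
    intro i
    have h1 : |(w i + β) * y i - (1+β) * ystar i| ≤ c₁ * (G * R) :=
      le_trans (htb i) (mul_le_mul_of_nonneg_left (hdG i) (le_of_lt hc₁pos))
    calc ((w i + β) * y i - (1+β) * ystar i)^2
        = |(w i + β) * y i - (1+β) * ystar i|^2 := (sq_abs _).symm
      _ ≤ (c₁ * (G * R))^2 := pow_le_pow_left₀ (abs_nonneg _) h1 2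
      _ = c₁^2 * G^2 * R^2 := by ring
  have hR2 : R^2 ≤ (n : ℝ) * ∑ j, ‖r j‖^2 := by
    have h := sq_sum_le_card_mul_sum_sq (s := (Finset.univ : Finset (Fin n)))
      (f := fun j => ‖r j‖)
    simpa [hRdef] using h
  have hrnn : 0 ≤ ∑ j, ‖r j‖^2 := Finset.sum_nonneg fun j _ => sq_nonneg _
  have hfinal : ∑ i, ((w i + β) * y i - (1 + β) * ystar i) ^ 2
      ≤ (n:ℝ)^2 * c₁^2 * G^2 * F * q := by
    calc ∑ i, ((w i + β) * y i - (1 + β) * ystar i) ^ 2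
        ≤ ∑ _i : Fin n, c₁^2 * G^2 * R^2 := Finset.sum_le_sum fun i _ => hterm i
      _ = (n:ℝ) * (c₁^2 * G^2 * R^2) := by
          rw [Finset.sum_const, Finset.card_univ, Fintype.card_fin, nsmul_eq_mul]
      _ ≤ (n:ℝ) * (c₁^2 * G^2 * ((n:ℝ) * ∑ j, ‖r j‖^2)) := by
          have hGpos : (0:ℝ) < G := lt_of_lt_of_le one_pos hGnn
          apply mul_le_mul_of_nonneg_left _ (Nat.cast_nonneg n)
          apply mul_le_mul_of_nonneg_left hR2 (by positivity)
      _ ≤ (n:ℝ) * (c₁^2 * G^2 * ((n:ℝ) * (F * q))) := by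
          have hGpos : (0:ℝ) < G := lt_of_lt_of_le one_pos hGnn
          apply mul_le_mul_of_nonneg_left _ (Nat.cast_nonneg n)
          apply mul_le_mul_of_nonneg_left _ (by positivity)
          exact mul_le_mul_of_nonneg_left hrsum (Nat.cast_nonneg n)
      _ = (n:ℝ)^2 * c₁^2 * G^2 * F * q := by ring
  nlinarith [hqnn]
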